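/- Let 0<λ<1 and b∈D. Define F_b(z) = (1-|b|^2)(1-b̄ z)^{(λ-3)/2}. Then there is a constant C depending only on λ such that sup_{a∈D}(1-|a|^2)^{1-λ}∫_D |F_b'(z)|^2(1-|φ_a(z)|^2)dm(z) ≤ C. -/

import Mathlib

open MeasureTheory Real Set Filter Topology

set_option maxHeartbeats 1000000

noncomputable section

/-- The open unit disk in ℂ. -/
def UD : Set ℂ := Metric.ball 0 1

/-- The Möbius map φ_a(z) = (a - z)/(1 - ā z). -/
def moeb (a z : ℂ) : ℂ := (a - z) / (1 - (starRingEnd ℂ) a * z)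

/-- The Morrey quantity (1-|a|²)^{1-λ} ∫_D |f'(z)|² (1-|φ_a(z)|²) dm(z),
with dm normalized area measure (1/π)·(Lebesgue measure). -/
def morreyInt (lam : ℝ) (f : ℂ → ℂ) (a : ℂ) : ℝ :=
  (1 - ‖a‖ ^ 2) ^ (1 - lam) *
    (π⁻¹ * ∫ z in UD, ‖deriv f z‖ ^ 2 * (1 - ‖moeb a z‖ ^ 2))

lemma mem_UD {z : ℂ} : z ∈ UD ↔ ‖z‖ < 1 := by
  simp [UD, Metric.mem_ball, Complex.dist_eq]

lemma intOn_of_bdd {α : Type*} [MeasureSpace α] [TopologicalSpace α] [OpensMeasurableSpace α]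
    [SecondCountableTopology α] {f : α → ℝ} {s : Set α} (hs : MeasurableSet s)
    (hv : volume s ≠ ⊤) (hf : ContinuousOn f s) {M : ℝ} (hM : ∀ x ∈ s, |f x| ≤ M) :
    IntegrableOn f s := by
  have h1 : AEStronglyMeasurable f (volume.restrict s) := hf.aestronglyMeasurable hs
  refine Integrable.mono' (g := fun _ => M) ((integrableOn_const hv)) h1 ?_
  filter_upwards [ae_restrict_mem hs] with x hx using by simpa using hM x hx

lemma arctan_int {d : ℝ} (hd : 0 < d) : ∫ θ in Ioo (-π) π, (d^2 + θ^2)⁻¹ ≤ π / d := by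
  have hcont : Continuous fun θ : ℝ => (d^2 + θ^2)⁻¹ := by
    refine Continuous.inv₀ (by continuity) (fun x => by positivity)
  have hder : ∀ θ : ℝ, HasDerivAt (fun x => d⁻¹ * Real.arctan (x / d))
      ((d^2 + θ^2)⁻¹) θ := by
    intro θ
    have h1 : HasDerivAt (fun x : ℝ => x / d) (1 / d) θ := by
      simpa using (hasDerivAt_id θ).div_const d
    have h2 := (Real.hasDerivAt_arctan (θ / d)).comp θ h1
    have h3 := h2.const_mul d⁻¹
    refine h3.congr_deriv ?_
    field_simp
  have h4 : ∫ θ in Ioo (-π) π, (d^2 + θ^2)⁻¹ = ∫ θ in (-π)..π, (d^2 + θ^2)⁻¹ := by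
    rw [intervalIntegral.integral_of_le (by linarith [Real.pi_pos]),
      integral_Ioc_eq_integral_Ioo]
  rw [h4, intervalIntegral.integral_eq_sub_of_hasDerivAt (fun x _ => hder x)
    (hcont.intervalIntegrable _ _)]
  have b1 := Real.arctan_lt_pi_div_two (π / d)
  have b2 := Real.neg_pi_div_two_lt_arctan (-π / d)
  have : d⁻¹ * Real.arctan (π / d) - d⁻¹ * Real.arctan (-π / d)
      = d⁻¹ * (Real.arctan (π / d) - Real.arctan (-π / d)) := by ring
  rw [this]
  have h5 : Real.arctan (π / d) - Real.arctan (-π / d) ≤ π := by linarith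
  calc d⁻¹ * (Real.arctan (π / d) - Real.arctan (-π / d)) ≤ d⁻¹ * π :=
        mul_le_mul_of_nonneg_left h5 (by positivity)
    _ = π / d := by ring

lemma normSq_one_sub_mul_exp (c θ : ℝ) :
    Complex.normSq (1 - (c:ℂ) * Complex.exp (θ * Complex.I)) = 1 - 2*c*Real.cos θ + c^2 := by
  have hs := Real.sin_sq_add_cos_sq θ
  rw [Complex.exp_mul_I]
  simp only [Complex.normSq_apply, Complex.sub_re, Complex.sub_im, Complex.one_re, Complex.one_im,
    Complex.mul_re, Complex.mul_im, Complex.ofReal_re, Complex.ofReal_im, Complex.add_re,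
    Complex.add_im, Complex.mul_I_re, Complex.mul_I_im, Complex.cos_ofReal_re,
    Complex.cos_ofReal_im, Complex.sin_ofReal_re, Complex.sin_ofReal_im, Complex.I_re, Complex.I_im]
  nlinarith [hs]

lemma ang_aux (lam : ℝ) (h0 : 0 < lam) (h1 : lam < 1) {c : ℝ} (hc0 : 0 ≤ c) (hc1 : c < 1) :
    ∫ θ in Ioo (-π) π, ‖1 - (c:ℂ) * Complex.exp (θ * Complex.I)‖ ^ (lam - 5)
      ≤ π^6 * (1 - c) ^ (lam - 4) := by
  have hπ := Real.pi_pos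
  have hπ3 := Real.pi_gt_three
  have hd : (0:ℝ) < 1 - c := by linarith
  have habs : ∀ θ : ℝ, 1 - c ≤ ‖1 - (c:ℂ) * Complex.exp (θ * Complex.I)‖ := by
    intro θ
    have h2 : ‖(c:ℂ) * Complex.exp (θ * Complex.I)‖ = c := by
      rw [norm_mul, Complex.norm_real, Real.norm_eq_abs, Complex.norm_exp_ofReal_mul_I, abs_of_nonneg hc0, mul_one]
    calc 1 - c = ‖(1:ℂ)‖ - ‖(c:ℂ) * Complex.exp (θ * Complex.I)‖ := by
          rw [norm_one, h2]
      _ ≤ ‖1 - (c:ℂ) * Complex.exp (θ * Complex.I)‖ := norm_sub_norm_le _ _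
      _ = _ := rfl
  have habs_pos : ∀ θ : ℝ, 0 < ‖1 - (c:ℂ) * Complex.exp (θ * Complex.I)‖ :=
    fun θ => lt_of_lt_of_le hd (habs θ)
  have hcont : Continuous fun θ : ℝ =>
      ‖1 - (c:ℂ) * Complex.exp (θ * Complex.I)‖ ^ (lam - 5) := by
    apply Continuous.rpow_const
    · exact continuous_norm.comp (by continuity)
    · exact fun θ => Or.inl (habs_pos θ).ne'
  have hint : IntegrableOn (fun θ : ℝ =>
      ‖1 - (c:ℂ) * Complex.exp (θ * Complex.I)‖ ^ (lam - 5)) (Ioo (-π) π) := by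
    refine intOn_of_bdd measurableSet_Ioo (by simp) hcont.continuousOn
      (M := (1-c) ^ (lam - 5)) (fun θ _ => ?_)
    rw [abs_of_nonneg (Real.rpow_nonneg (norm_nonneg _) _)]
    exact Real.rpow_le_rpow_of_nonpos hd (habs θ) (by linarith)
  rcases le_or_gt c (1/2) with hc | hc
  · -- easy case
    have hb : ∀ θ ∈ Ioo (-π) π,
        ‖1 - (c:ℂ) * Complex.exp (θ * Complex.I)‖ ^ (lam - 5) ≤ (1-c) ^ (lam-5) :=
      fun θ _ => Real.rpow_le_rpow_of_nonpos hd (habs θ) (by linarith)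
    have h3 : ∫ θ in Ioo (-π) π,
          ‖1 - (c:ℂ) * Complex.exp (θ * Complex.I)‖ ^ (lam - 5)
        ≤ ∫ _ in Ioo (-π) π, (1-c) ^ (lam-5) := by
      exact setIntegral_mono_on hint (integrableOn_const (by simp))
        measurableSet_Ioo hb
    rw [setIntegral_const, measureReal_def, Real.volume_Ioo, smul_eq_mul] at h3
    have h4 : (ENNReal.ofReal (π - -π)).toReal = 2 * π := by
      rw [ENNReal.toReal_ofReal (by linarith)]; ring
    rw [h4] at h3
    have h5 : (1-c) ^ (lam-5) ≤ 2 * (1-c) ^ (lam-4) := by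
      rw [show lam - 5 = (lam-4) + (-1) by ring, Real.rpow_add hd, Real.rpow_neg_one]
      have : (1-c)⁻¹ ≤ 2 := by
        rw [inv_le_comm₀ hd (by norm_num)]; linarith
      calc (1-c)^(lam-4) * (1-c)⁻¹ ≤ (1-c)^(lam-4) * 2 :=
            mul_le_mul_of_nonneg_left this (Real.rpow_nonneg hd.le _)
        _ = 2 * (1-c)^(lam-4) := by ring
    have h6 : (4:ℝ) * π ≤ π^6 := by
      have h45 : (4:ℝ) ≤ π^5 := by nlinarith [pow_le_pow_left₀ (by norm_num : (0:ℝ) ≤ 3) hπ3.le 5]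
      calc (4:ℝ)*π ≤ π^5*π := mul_le_mul_of_nonneg_right h45 hπ.le
        _ = π^6 := by ring
    calc _ ≤ 2 * π * ((1-c) ^ (lam-5)) := h3
      _ ≤ 2 * π * (2 * (1-c) ^ (lam-4)) := by
          exact mul_le_mul_of_nonneg_left h5 (by positivity)
      _ = 4 * π * (1-c) ^ (lam-4) := by ring
      _ ≤ π^6 * (1-c) ^ (lam-4) :=
          mul_le_mul_of_nonneg_right h6 (Real.rpow_nonneg hd.le _)
  · -- main case
    have key : ∀ θ ∈ Ioo (-π) π,
        ‖1 - (c:ℂ) * Complex.exp (θ * Complex.I)‖ ^ (lam - 5)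
          ≤ π^5 * (1-c) ^ (lam-3) * (((1-c)^2 + θ^2)⁻¹) := by
      intro θ hθ
      have hθπ : |θ| ≤ π := by
        rw [abs_le]; exact ⟨hθ.1.le, hθ.2.le⟩
      set X : ℝ := (1-c)^2 + θ^2 with hX
      have hX0 : 0 < X := by positivity
      have hcos : Real.cos θ ≤ 1 - 2/π^2 * θ^2 := Real.cos_le_one_sub_mul_cos_sq hθπ
      have hstep1 : 2/π^2 * X ≤ Complex.normSq (1 - (c:ℂ) * Complex.exp (θ * Complex.I)) := by
        rw [normSq_one_sub_mul_exp]
        have h2c : (1:ℝ) ≤ 2 * c := by linarith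
        have hππ : 2/π^2 ≤ 1 := by
          rw [div_le_one (by positivity)]; nlinarith
        have hA : 2/π^2 * θ^2 ≤ 1 - Real.cos θ := by nlinarith
        have hB : 1 - Real.cos θ ≤ 2*c*(1-Real.cos θ) := by nlinarith [Real.cos_le_one θ]
        have hC : 2/π^2 * (1-c)^2 ≤ (1-c)^2 := by nlinarith [sq_nonneg (1-c)]
        nlinarith [hA, hB, hC]
      have habseq : ‖1 - (c:ℂ) * Complex.exp (θ * Complex.I)‖ ^ (lam - 5)
          = Complex.normSq (1 - (c:ℂ) * Complex.exp (θ * Complex.I)) ^ ((1/2) * (lam-5)) := by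
        rw [Complex.norm_def, Real.sqrt_eq_rpow, ← Real.rpow_mul (Complex.normSq_nonneg _)]
      have hq : (1/2) * (lam - 5) ≤ 0 := by linarith
      have hstep3 : Complex.normSq (1 - (c:ℂ) * Complex.exp (θ * Complex.I)) ^ ((1/2) * (lam-5))
          ≤ (2/π^2 * X) ^ ((1/2) * (lam-5)) :=
        Real.rpow_le_rpow_of_nonpos (by positivity) hstep1 hq
      have hstep4 : (2/π^2 * X) ^ ((1/2) * (lam-5))
          = (2/π^2) ^ ((1/2) * (lam-5)) * X ^ ((1/2) * (lam-5)) :=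
        Real.mul_rpow (by positivity) hX0.le
      have hbase1 : (2/π^2 : ℝ) ^ ((1/2) * (lam-5)) ≤ π^5 := by
        have hb0 : (0:ℝ) < 2/π^2 := by positivity
        have hb1 : (2/π^2 : ℝ) ≤ 1 := by
          rw [div_le_one (by positivity)]; nlinarith
        have e1 : (2/π^2 : ℝ) ^ ((1/2) * (lam-5)) ≤ (2/π^2 : ℝ) ^ (-(5/2) : ℝ) :=
          Real.rpow_le_rpow_of_exponent_ge hb0 hb1 (by linarith)
        have e2 : (2/π^2 : ℝ) ^ (-(5/2) : ℝ) = (π^2/2 : ℝ) ^ ((5/2) : ℝ) := by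
          rw [Real.rpow_neg hb0.le, ← Real.inv_rpow hb0.le]
          norm_num
        have e3 : (π^2/2 : ℝ) ^ ((5/2) : ℝ) ≤ (π^2 : ℝ) ^ ((5/2) : ℝ) :=
          Real.rpow_le_rpow (by positivity) (by nlinarith) (by norm_num)
        have e4 : (π^2 : ℝ) ^ ((5/2) : ℝ) = π^5 := by
          rw [← Real.rpow_natCast π 2, ← Real.rpow_mul hπ.le,
            show ((2:ℕ):ℝ) * (5/2) = ((5:ℕ):ℝ) by norm_num, Real.rpow_natCast]
        linarith
      have hstep5 : X ^ ((1/2) * (lam-5)) ≤ (1-c) ^ (lam-3) * X⁻¹ := by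
        have e1 : X ^ ((1/2) * (lam-5)) = X ^ ((1/2) * (lam-3)) * X⁻¹ := by
          rw [← Real.rpow_neg_one X, ← Real.rpow_add hX0]
          ring_nf
        have e2 : X ^ ((1/2) * (lam-3)) ≤ ((1-c)^2) ^ ((1/2) * (lam-3)) :=
          Real.rpow_le_rpow_of_nonpos (by positivity) (by nlinarith [sq_nonneg θ]) (by linarith)
        have e3 : ((1-c)^2 : ℝ) ^ ((1/2) * (lam-3)) = (1-c) ^ (lam-3) := by
          rw [← Real.rpow_natCast (1-c) 2, ← Real.rpow_mul hd.le]
          congr 1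
          push_cast; ring
        rw [e1]
        refine mul_le_mul_of_nonneg_right ?_ (by positivity)
        rw [← e3]; exact e2
      calc ‖1 - (c:ℂ) * Complex.exp (θ * Complex.I)‖ ^ (lam - 5)
          = Complex.normSq (1 - (c:ℂ) * Complex.exp (θ * Complex.I)) ^ ((1/2) * (lam-5)) :=
            habseq
        _ ≤ (2/π^2 * X) ^ ((1/2) * (lam-5)) := hstep3
        _ = (2/π^2) ^ ((1/2) * (lam-5)) * X ^ ((1/2) * (lam-5)) := hstep4
        _ ≤ π^5 * ((1-c) ^ (lam-3) * X⁻¹) := by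
            exact mul_le_mul hbase1 hstep5 (Real.rpow_nonneg hX0.le _) (by positivity)
        _ = π^5 * (1-c) ^ (lam-3) * X⁻¹ := by ring
    have hgint : IntegrableOn (fun θ : ℝ => π^5 * (1-c) ^ (lam-3) * (((1-c)^2 + θ^2)⁻¹))
        (Ioo (-π) π) := by
      refine intOn_of_bdd measurableSet_Ioo (by simp)
        ((continuous_const.mul (Continuous.inv₀ (by continuity)
          (fun x => by positivity))).continuousOn)
        (M := π^5 * (1-c) ^ (lam-3) * (((1-c)^2)⁻¹))
        (fun θ _ => ?_)
      rw [abs_of_nonneg (by positivity)]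
      refine mul_le_mul_of_nonneg_left ?_ (by positivity)
      exact inv_anti₀ (by positivity) (by nlinarith [sq_nonneg θ])
    have h3 := setIntegral_mono_on hint hgint measurableSet_Ioo key
    have h4 : ∫ θ in Ioo (-π) π, π^5 * (1-c) ^ (lam-3) * (((1-c)^2 + θ^2)⁻¹)
        = π^5 * (1-c) ^ (lam-3) * ∫ θ in Ioo (-π) π, ((1-c)^2 + θ^2)⁻¹ := by
      rw [← integral_const_mul]
    have h5 := arctan_int hd
    calc _ ≤ π^5 * (1-c) ^ (lam-3) * ∫ θ in Ioo (-π) π, ((1-c)^2 + θ^2)⁻¹ := by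
          rw [← h4]; exact h3
      _ ≤ π^5 * (1-c) ^ (lam-3) * (π / (1-c)) := by
          exact mul_le_mul_of_nonneg_left h5 (by positivity)
      _ = π^6 * ((1-c) ^ (lam-3) * (1-c)⁻¹) := by ring
      _ = π^6 * (1-c) ^ (lam-4) := by
          rw [← Real.rpow_neg_one (1-c), ← Real.rpow_add hd]
          ring_nf

lemma ang (lam : ℝ) (h0 : 0 < lam) (h1 : lam < 1) {w : ℂ} (hw : ‖w‖ < 1) :
    ∫ θ in Ioo (-π) π, ‖1 - w * Complex.exp (θ * Complex.I)‖ ^ (lam - 5)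
      ≤ π^6 * (1 - ‖w‖) ^ (lam - 4) := by
  have hπ := Real.pi_pos
  set c : ℝ := ‖w‖ with hc
  set φ : ℝ := Complex.arg w with hφ
  have hdec : ∀ θ : ℝ, w * Complex.exp (θ * Complex.I) = (c:ℂ) * Complex.exp ((θ + φ) * Complex.I) := by
    intro θ
    rw [← Complex.norm_mul_exp_arg_mul_I w]
    push_cast
    rw [mul_assoc, ← Complex.exp_add]
    ring_nf
    rw [← hc, ← hφ]
    ring_nf
  have hper : Function.Periodic
      (fun θ : ℝ => ‖1 - (c:ℂ) * Complex.exp (θ * Complex.I)‖ ^ (lam - 5)) (2*π) := by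
    intro θ
    have : ((θ:ℂ) + 2*π) * Complex.I = θ * Complex.I + 2*π*Complex.I := by ring
    simp only []
    rw [show ((θ + 2*π : ℝ) : ℂ) = (θ:ℂ) + 2*π by push_cast; ring, this,
      Complex.exp_add, Complex.exp_two_pi_mul_I, mul_one]
  have h2 : ∫ θ in Ioo (-π) π, ‖1 - w * Complex.exp (θ * Complex.I)‖ ^ (lam - 5)
      = ∫ θ in Ioo (-π) π, ‖1 - (c:ℂ) * Complex.exp (θ * Complex.I)‖ ^ (lam - 5) := by
    rw [← integral_Ioc_eq_integral_Ioo, ← intervalIntegral.integral_of_le (by linarith),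
      ← integral_Ioc_eq_integral_Ioo, ← intervalIntegral.integral_of_le (by linarith)]
    have e1 : ∀ θ : ℝ, ‖1 - w * Complex.exp (θ * Complex.I)‖ ^ (lam - 5)
        = (fun t : ℝ => ‖1 - (c:ℂ) * Complex.exp (t * Complex.I)‖ ^ (lam - 5)) (θ + φ) := by
      intro θ
      simp only []
      rw [hdec]
      push_cast
      ring_nf
    calc (∫ θ in (-π)..π, ‖1 - w * Complex.exp (θ * Complex.I)‖ ^ (lam - 5))
        = ∫ θ in (-π)..π,
            (fun t : ℝ => ‖1 - (c:ℂ) * Complex.exp (t * Complex.I)‖ ^ (lam - 5)) (θ + φ) := by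
          simp_rw [e1]
      _ = ∫ θ in (-π + φ)..(π + φ),
            ‖1 - (c:ℂ) * Complex.exp (θ * Complex.I)‖ ^ (lam - 5) := by
          exact intervalIntegral.integral_comp_add_right
            (fun t : ℝ => ‖1 - (c:ℂ) * Complex.exp (t * Complex.I)‖ ^ (lam - 5)) φ
      _ = ∫ θ in (-π)..π, ‖1 - (c:ℂ) * Complex.exp (θ * Complex.I)‖ ^ (lam - 5) := by
          have := hper.intervalIntegral_add_eq (-π + φ) (-π)
          rw [show -π + φ + 2*π = π + φ by ring, show -π + 2*π = π by ring] at this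
          exact this
  rw [h2]
  exact ang_aux lam h0 h1 (norm_nonneg w) hw

lemma radial_int {ρ : ℝ} (hρ0 : 0 ≤ ρ) (hρ1 : ρ < 1) :
    ∫ r in Ioo (0:ℝ) 1, ((1 - ρ*r)^3)⁻¹ ≤ 8 * ((1-ρ)^2)⁻¹ := by
  have hd : (0:ℝ) < 1 - ρ := by linarith
  have hpos : ∀ r : ℝ, 0 ≤ r → r ≤ 1 → 0 < 1 - ρ * r := by
    intro r h1 h2; nlinarith
  have hcont : ContinuousOn (fun r : ℝ => ((1 - ρ*r)^3)⁻¹) (Icc 0 1) := by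
    refine ContinuousOn.inv₀ (by fun_prop) ?_
    intro x hx
    have := hpos x hx.1 hx.2
    positivity
  rcases le_or_gt ρ (1/2) with hc | hc
  · have hb : ∀ r ∈ Ioo (0:ℝ) 1, ((1 - ρ*r)^3)⁻¹ ≤ 8 := by
      intro r hr
      have h3 : (1:ℝ)/2 ≤ 1 - ρ*r := by nlinarith [hr.1, hr.2]
      rw [show (8:ℝ) = ((1/2:ℝ)^3)⁻¹ by norm_num]
      exact inv_anti₀ (by norm_num) (pow_le_pow_left₀ (by norm_num) h3 3)
    have hint : IntegrableOn (fun r : ℝ => ((1 - ρ*r)^3)⁻¹) (Ioo (0:ℝ) 1) := by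
      refine intOn_of_bdd measurableSet_Ioo (by simp)
        (hcont.mono Ioo_subset_Icc_self) (M := 8) (fun r hr => ?_)
      have h := hpos r hr.1.le hr.2.le
      rw [abs_of_nonneg (inv_pos.2 (pow_pos h 3)).le]
      exact hb r hr
    have h3 : ∫ r in Ioo (0:ℝ) 1, ((1 - ρ*r)^3)⁻¹ ≤ ∫ _ in Ioo (0:ℝ) 1, (8:ℝ) :=
      setIntegral_mono_on hint (integrableOn_const (by simp)) measurableSet_Ioo hb
    rw [setIntegral_const, measureReal_def, Real.volume_Ioo, smul_eq_mul] at h3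
    have h4 : (ENNReal.ofReal (1 - 0 : ℝ)).toReal = 1 := by
      rw [ENNReal.toReal_ofReal (by norm_num)]; norm_num
    rw [h4, one_mul] at h3
    have h5 : (1:ℝ) ≤ ((1-ρ)^2)⁻¹ := by
      rw [le_inv_comm₀ (by norm_num) (by positivity)]
      nlinarith
    nlinarith
  · have hρpos : (0:ℝ) < ρ := by linarith
    have hder : ∀ r ∈ uIcc (0:ℝ) 1, HasDerivAt (fun r : ℝ => (2*ρ)⁻¹ * ((1-ρ*r)^2)⁻¹)
        (((1 - ρ*r)^3)⁻¹) r := by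
      intro r hr
      rw [uIcc_of_le (by norm_num)] at hr
      have hne : 1 - ρ*r ≠ 0 := (hpos r hr.1 hr.2).ne'
      have d1 : HasDerivAt (fun r : ℝ => 1 - ρ*r) (-ρ) r := by
        simpa using ((hasDerivAt_id r).const_mul ρ).const_sub 1
      have d2 : HasDerivAt (fun r : ℝ => (1-ρ*r)^2) (2*(1-ρ*r)^1*(-ρ)) r := by
        simpa using d1.fun_pow 2
      have d3 := (d2.inv (pow_ne_zero 2 hne)).const_mul (2*ρ)⁻¹
      refine d3.congr_deriv ?_
      field_simp
    have hii : IntervalIntegrable (fun r : ℝ => ((1 - ρ*r)^3)⁻¹) volume 0 1 := by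
      apply ContinuousOn.intervalIntegrable
      rwa [uIcc_of_le (by norm_num)]
    have h3 : ∫ r in Ioo (0:ℝ) 1, ((1 - ρ*r)^3)⁻¹
        = (2*ρ)⁻¹ * ((1-ρ*1)^2)⁻¹ - (2*ρ)⁻¹ * ((1-ρ*0)^2)⁻¹ := by
      rw [← integral_Ioc_eq_integral_Ioo, ← intervalIntegral.integral_of_le (by norm_num)]
      exact intervalIntegral.integral_eq_sub_of_hasDerivAt hder hii
    rw [h3]
    have h4 : (2*ρ)⁻¹ ≤ 1 := by
      rw [inv_le_one_iff₀]; right; linarith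
    have h5 : (0:ℝ) < ((1-ρ)^2)⁻¹ := by positivity
    have h6 : (2*ρ)⁻¹ * ((1-ρ*1)^2)⁻¹ ≤ ((1-ρ)^2)⁻¹ := by
      rw [mul_one]
      calc (2*ρ)⁻¹ * ((1-ρ)^2)⁻¹ ≤ 1 * ((1-ρ)^2)⁻¹ :=
            mul_le_mul_of_nonneg_right h4 h5.le
        _ = ((1-ρ)^2)⁻¹ := one_mul _
    have h7 : 0 ≤ (2*ρ)⁻¹ * ((1-ρ*0)^2)⁻¹ := by positivity
    nlinarith

lemma FR (lam : ℝ) (h0 : 0 < lam) (h1 : lam < 1) {b : ℂ} (hb : ‖b‖ < 1) :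
    ∫ z in UD, (1 - ‖z‖ ^ 2) ^ (1 - lam) *
        ‖1 - (starRingEnd ℂ) b * z‖ ^ (lam - 5)
      ≤ 16 * π^6 * ((1 - ‖b‖)^2)⁻¹ := by
  have hπ := Real.pi_pos
  set ρ : ℝ := ‖b‖ with hρ
  have hρ0 : 0 ≤ ρ := norm_nonneg b
  have hρd : (0:ℝ) < 1 - ρ := by linarith
  set g : ℂ → ℝ := fun z => (1 - ‖z‖ ^ 2) ^ (1 - lam) *
    ‖1 - (starRingEnd ℂ) b * z‖ ^ (lam - 5) with hg
  set H : ℝ × ℝ → ℝ := fun p => (p.1 * (1 - p.1^2) ^ (1-lam)) *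
    ‖1 - ((starRingEnd ℂ) b * p.1) * Complex.exp (p.2 * Complex.I)‖ ^ (lam - 5)
    with hH
  set B : Set (ℝ × ℝ) := Ioo (0:ℝ) 1 ×ˢ Ioo (-π) π with hB
  have hUDm : MeasurableSet UD := measurableSet_ball
  have hBm : MeasurableSet B := measurableSet_Ioo.prod measurableSet_Ioo
  have hBsub : B ⊆ polarCoord.target := by
    intro p hp
    exact ⟨hp.1.1, hp.2⟩
  -- lower bound for the kernel on the disk
  have habs_low : ∀ w : ℂ, 1 - ‖w‖ ≤ ‖1 - w‖ := by
    intro w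
    calc 1 - ‖w‖ = ‖(1:ℂ)‖ - ‖w‖ := by rw [norm_one]
      _ ≤ ‖1 - w‖ := norm_sub_norm_le _ _
      _ = _ := rfl
  -- continuity and boundedness of g on UD
  have hg_cont : ContinuousOn g UD := by
    apply ContinuousOn.mul
    · apply ContinuousOn.rpow_const
      · exact (continuous_const.sub (continuous_norm.pow 2)).continuousOn
      · intro z _; right; linarith
    · apply ContinuousOn.rpow_const
      · exact (continuous_norm.comp
          (continuous_const.sub (continuous_const.mul continuous_id))).continuousOn
      · intro z hz
        left
        have h2 : ‖(starRingEnd ℂ) b * z‖ = ρ * ‖z‖ := by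
          rw [norm_mul, Complex.norm_conj]
        have h3 : ρ * ‖z‖ < 1 := by
          have := mem_UD.1 hz
          nlinarith [norm_nonneg z]
        have := habs_low ((starRingEnd ℂ) b * z)
        rw [h2] at this
        intro hcon
        rw [hcon] at this
        linarith
  have habs_ge : ∀ z : ℂ, ‖z‖ ≤ 1 → 1 - ρ ≤ ‖1 - (starRingEnd ℂ) b * z‖ := by
    intro z hz
    have h2 : ‖(starRingEnd ℂ) b * z‖ = ρ * ‖z‖ := by
      rw [norm_mul, Complex.norm_conj]
    have h3 : ρ * ‖z‖ ≤ ρ := by nlinarith [norm_nonneg z]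
    have h4 := habs_low ((starRingEnd ℂ) b * z)
    rw [h2] at h4
    linarith
  have hg_bdd : ∀ z ∈ UD, |g z| ≤ (1-ρ) ^ (lam - 5) := by
    intro z hz
    have hz1 : ‖z‖ < 1 := mem_UD.1 hz
    have hb1 : (0:ℝ) ≤ 1 - ‖z‖ ^ 2 := by nlinarith [norm_nonneg z]
    have hfac1 : (1 - ‖z‖ ^ 2) ^ (1 - lam) ≤ 1 :=
      Real.rpow_le_one hb1 (by nlinarith [norm_nonneg z]) (by linarith)
    have hfac2 : ‖1 - (starRingEnd ℂ) b * z‖ ^ (lam - 5) ≤ (1-ρ) ^ (lam-5) :=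
      Real.rpow_le_rpow_of_nonpos hρd (habs_ge z hz1.le) (by linarith)
    have hnn1 : 0 ≤ (1 - ‖z‖ ^ 2) ^ (1 - lam) := Real.rpow_nonneg hb1 _
    have hnn2 : 0 ≤ ‖1 - (starRingEnd ℂ) b * z‖ ^ (lam - 5) :=
      Real.rpow_nonneg (norm_nonneg _) _
    rw [hg, abs_of_nonneg (mul_nonneg hnn1 hnn2)]
    calc (1 - ‖z‖ ^ 2) ^ (1 - lam) *
          ‖1 - (starRingEnd ℂ) b * z‖ ^ (lam - 5)
        ≤ 1 * ((1-ρ) ^ (lam-5)) := mul_le_mul hfac1 hfac2 hnn2 zero_le_one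
      _ = (1-ρ) ^ (lam-5) := one_mul _
  -- polar coordinates
  have step1 : ∫ z in UD, g z
      = ∫ p in polarCoord.target, p.1 • (UD.indicator g) (Complex.polarCoord.symm p) := by
    rw [← integral_indicator hUDm, ← Complex.integral_comp_polarCoord_symm (UD.indicator g)]
  have hsymm : ∀ p : ℝ × ℝ, Complex.polarCoord.symm p
      = (p.1 : ℂ) * Complex.exp (p.2 * Complex.I) := by
    intro p
    rw [Complex.polarCoord_symm_apply, Complex.exp_mul_I]
    norm_cast
  have step2 : ∀ p ∈ polarCoord.target,
      p.1 • (UD.indicator g) (Complex.polarCoord.symm p) = B.indicator H p := by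
    rintro ⟨r, θ⟩ hp
    have hr : 0 < r := hp.1
    have hae : ‖Complex.polarCoord.symm (r, θ)‖ = r := by
      rw [Complex.norm_polarCoord_symm, abs_of_pos hr]
    by_cases hr1 : r < 1
    · have hmem : Complex.polarCoord.symm (r, θ) ∈ UD := mem_UD.2 (by rw [hae]; exact hr1)
      have hmemB : ((r, θ) : ℝ × ℝ) ∈ B := ⟨⟨hr, hr1⟩, hp.2⟩
      rw [indicator_of_mem hmem, indicator_of_mem hmemB, hg, hH]
      simp only [smul_eq_mul]
      rw [hsymm (r, θ)]
      have e2 : ‖(r:ℂ) * Complex.exp ((θ:ℝ) * Complex.I)‖ = r := by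
        rw [norm_mul, Complex.norm_real, Real.norm_eq_abs, Complex.norm_exp_ofReal_mul_I, abs_of_pos hr, mul_one]
      rw [e2]
      ring_nf
    · have hmem : Complex.polarCoord.symm (r, θ) ∉ UD := by
        rw [mem_UD, hae]; exact fun h => hr1 h
      have hmemB : ((r, θ) : ℝ × ℝ) ∉ B := fun h => hr1 h.1.2
      rw [indicator_of_notMem hmem, indicator_of_notMem hmemB, smul_zero]
  have step3 : ∫ p in polarCoord.target, p.1 • (UD.indicator g) (Complex.polarCoord.symm p)
      = ∫ p in B, H p := by
    rw [setIntegral_congr_fun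
      (show MeasurableSet polarCoord.target from measurableSet_Ioi.prod measurableSet_Ioo) step2]
    rw [setIntegral_indicator hBm, inter_eq_self_of_subset_right hBsub]
  have hvolB : volume B ≠ ⊤ := by
    rw [hB, Measure.volume_eq_prod, Measure.prod_prod, Real.volume_Ioo, Real.volume_Ioo]
    exact ENNReal.mul_ne_top ENNReal.ofReal_ne_top ENNReal.ofReal_ne_top
  have habsw : ∀ r : ℝ, 0 ≤ r → ‖(starRingEnd ℂ) b * r‖ = ρ * r := by
    intro r hr
    rw [norm_mul, Complex.norm_conj, Complex.norm_real, Real.norm_eq_abs, abs_of_nonneg hr]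
  have habs_ge2 : ∀ p : ℝ × ℝ, 0 ≤ p.1 → p.1 ≤ 1 →
      1 - ρ * p.1 ≤ ‖1 - ((starRingEnd ℂ) b * p.1) * Complex.exp (p.2 * Complex.I)‖ := by
    intro p hp0 hp1
    have h2 : ‖((starRingEnd ℂ) b * p.1) * Complex.exp (p.2 * Complex.I)‖
        = ρ * p.1 := by
      rw [norm_mul, habsw p.1 hp0, Complex.norm_exp_ofReal_mul_I, mul_one]
    have := habs_low (((starRingEnd ℂ) b * p.1) * Complex.exp (p.2 * Complex.I))
    rw [h2] at this
    exact this
  have hρr_pos : ∀ r : ℝ, 0 ≤ r → r ≤ 1 → 0 < 1 - ρ * r := by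
    intro r h1 h2; nlinarith
  have hH_cont : ContinuousOn H B := by
    apply ContinuousOn.mul
    · apply ContinuousOn.mul continuous_fst.continuousOn
      apply ContinuousOn.rpow_const
      · exact (continuous_const.sub ((continuous_fst.pow 2))).continuousOn
      · intro p _; right; linarith
    · apply ContinuousOn.rpow_const
      · apply Continuous.continuousOn
        apply continuous_norm.comp
        apply Continuous.sub continuous_const
        apply Continuous.mul
        · exact continuous_const.mul (Complex.continuous_ofReal.comp continuous_fst)
        · exact Complex.continuous_exp.comp
            ((Complex.continuous_ofReal.comp continuous_snd).mul continuous_const)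
      · intro p hp
        left
        have := habs_ge2 p hp.1.1.le hp.1.2.le
        have h3 := hρr_pos p.1 hp.1.1.le hp.1.2.le
        intro hcon
        rw [hcon] at this
        linarith
  have hH_bdd : ∀ p ∈ B, |H p| ≤ (1-ρ) ^ (lam - 5) := by
    intro p hp
    have hp0 : 0 < p.1 := hp.1.1
    have hp1 : p.1 < 1 := hp.1.2
    have hb1 : (0:ℝ) ≤ 1 - p.1 ^ 2 := by nlinarith
    have hnn1 : 0 ≤ p.1 * (1 - p.1^2) ^ (1-lam) :=
      mul_nonneg hp0.le (Real.rpow_nonneg hb1 _)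
    have hnn2 : 0 ≤ ‖1 - ((starRingEnd ℂ) b * p.1) *
        Complex.exp (p.2 * Complex.I)‖ ^ (lam - 5) := Real.rpow_nonneg (norm_nonneg _) _
    rw [hH, abs_of_nonneg (mul_nonneg hnn1 hnn2)]
    have hf1 : p.1 * (1 - p.1^2) ^ (1-lam) ≤ 1 := by
      calc p.1 * (1 - p.1^2) ^ (1-lam) ≤ 1 * 1 := by
            refine mul_le_mul hp1.le ?_ (Real.rpow_nonneg hb1 _) zero_le_one
            exact Real.rpow_le_one hb1 (by nlinarith) (by linarith)
        _ = 1 := one_mul 1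
    have hge : 1 - ρ ≤ ‖1 - ((starRingEnd ℂ) b * p.1) *
        Complex.exp (p.2 * Complex.I)‖ := by
      have h4 := habs_ge2 p hp0.le hp1.le
      have : ρ * p.1 ≤ ρ := by nlinarith
      linarith
    have hf2 : ‖1 - ((starRingEnd ℂ) b * p.1) *
        Complex.exp (p.2 * Complex.I)‖ ^ (lam - 5) ≤ (1-ρ) ^ (lam-5) :=
      Real.rpow_le_rpow_of_nonpos hρd hge (by linarith)
    calc p.1 * (1 - p.1^2) ^ (1-lam) * ‖1 - ((starRingEnd ℂ) b * p.1) *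
          Complex.exp (p.2 * Complex.I)‖ ^ (lam - 5)
        ≤ 1 * ((1-ρ) ^ (lam-5)) := mul_le_mul hf1 hf2 hnn2 zero_le_one
      _ = (1-ρ) ^ (lam-5) := one_mul _
  have hHint : IntegrableOn H B := intOn_of_bdd hBm hvolB hH_cont hH_bdd
  have step4 : ∫ p in B, H p = ∫ r in Ioo (0:ℝ) 1, ∫ θ in Ioo (-π) π, H (r, θ) := by
    rw [hB] at hHint ⊢
    rw [show (volume : Measure (ℝ × ℝ)) = Measure.prod volume volume from Measure.volume_eq_prod ℝ ℝ]
      at hHint ⊢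
    exact setIntegral_prod H hHint
  have inner_bd : ∀ r ∈ Ioo (0:ℝ) 1,
      ∫ θ in Ioo (-π) π, H (r, θ) ≤ 2*π^6 * ((1-ρ*r)^3)⁻¹ := by
    intro r hr
    have hrρ : 0 < 1 - ρ*r := hρr_pos r hr.1.le hr.2.le
    have e1 : ∫ θ in Ioo (-π) π, H (r, θ)
        = (r * (1-r^2) ^ (1-lam)) * ∫ θ in Ioo (-π) π,
            ‖1 - ((starRingEnd ℂ) b * r) * Complex.exp (θ * Complex.I)‖ ^ (lam-5) := by
      simp only [hH]
      exact integral_const_mul _ _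
    have hw : ‖(starRingEnd ℂ) b * r‖ < 1 := by
      rw [habsw r hr.1.le]; nlinarith [hr.1, hr.2]
    have hang := ang lam h0 h1 hw
    rw [habsw r hr.1.le] at hang
    have hc_nn : 0 ≤ r * (1-r^2) ^ (1-lam) :=
      mul_nonneg hr.1.le (Real.rpow_nonneg (by nlinarith [hr.1, hr.2]) _)
    have hA2 : (1-r^2) ^ (1-lam) ≤ 2 * (1-ρ*r) ^ (1-lam) := by
      have hA : (1-r^2) ^ (1-lam) ≤ 2 ^ (1-lam) * (1-ρ*r) ^ (1-lam) := by
        rw [← Real.mul_rpow (by norm_num) hrρ.le]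
        refine Real.rpow_le_rpow (by nlinarith [hr.1, hr.2]) ?_ (by linarith)
        nlinarith [hr.1, hr.2]
      have hB2 : (2:ℝ) ^ (1-lam) ≤ 2 := by
        calc (2:ℝ) ^ (1-lam) ≤ (2:ℝ) ^ (1:ℝ) :=
              Real.rpow_le_rpow_of_exponent_le one_le_two (by linarith)
          _ = 2 := Real.rpow_one 2
      calc (1-r^2) ^ (1-lam) ≤ 2 ^ (1-lam) * (1-ρ*r) ^ (1-lam) := hA
        _ ≤ 2 * (1-ρ*r) ^ (1-lam) :=
            mul_le_mul_of_nonneg_right hB2 (Real.rpow_nonneg hrρ.le _)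
    have hC : (1-ρ*r) ^ (1-lam) * (1-ρ*r) ^ (lam-4) = ((1-ρ*r)^3)⁻¹ := by
      rw [← Real.rpow_add hrρ,
        show (1-lam) + (lam-4) = -(((3:ℕ):ℝ)) by push_cast; ring,
        Real.rpow_neg hrρ.le, Real.rpow_natCast]
    calc ∫ θ in Ioo (-π) π, H (r, θ)
        = (r * (1-r^2) ^ (1-lam)) * ∫ θ in Ioo (-π) π,
            ‖1 - ((starRingEnd ℂ) b * r) * Complex.exp (θ * Complex.I)‖ ^ (lam-5) :=
          e1
      _ ≤ (r * (1-r^2) ^ (1-lam)) * (π^6 * (1 - ρ*r) ^ (lam - 4)) :=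
          mul_le_mul_of_nonneg_left hang hc_nn
      _ ≤ (1 * (2 * (1-ρ*r) ^ (1-lam))) * (π^6 * (1 - ρ*r) ^ (lam - 4)) := by
          refine mul_le_mul_of_nonneg_right ?_
            (mul_nonneg (by positivity) (Real.rpow_nonneg hrρ.le _))
          exact mul_le_mul hr.2.le hA2 (Real.rpow_nonneg (by nlinarith [hr.1, hr.2]) _)
            zero_le_one
      _ = 2*π^6 * ((1-ρ*r) ^ (1-lam) * (1-ρ*r) ^ (lam-4)) := by ring
      _ = 2*π^6 * ((1-ρ*r)^3)⁻¹ := by rw [hC]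
  have hInner_int : IntegrableOn (fun r => ∫ θ in Ioo (-π) π, H (r, θ)) (Ioo (0:ℝ) 1) := by
    have h5 := hHint
    rw [hB, show (volume : Measure (ℝ × ℝ)) = Measure.prod volume volume from
      Measure.volume_eq_prod ℝ ℝ] at h5
    rw [IntegrableOn, ← Measure.prod_restrict] at h5
    exact h5.integral_prod_left
  have hMaj_int : IntegrableOn (fun r : ℝ => 2*π^6*((1-ρ*r)^3)⁻¹) (Ioo (0:ℝ) 1) := by
    refine intOn_of_bdd measurableSet_Ioo (by simp) ?_ (M := 2*π^6*((1-ρ)^3)⁻¹) ?_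
    · refine ContinuousOn.mul continuous_const.continuousOn (ContinuousOn.inv₀ (by fun_prop) ?_)
      intro r hr
      have := hρr_pos r hr.1.le hr.2.le
      positivity
    · intro r hr
      have h6 := hρr_pos r hr.1.le hr.2.le
      rw [abs_of_nonneg (by positivity)]
      refine mul_le_mul_of_nonneg_left ?_ (by positivity)
      exact inv_anti₀ (by positivity) (pow_le_pow_left₀ hρd.le (by nlinarith [hr.2]) 3)
  have houter := setIntegral_mono_on hInner_int hMaj_int measurableSet_Ioo inner_bd
  have hfin : ∫ r in Ioo (0:ℝ) 1, 2*π^6*((1-ρ*r)^3)⁻¹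
      ≤ 16 * π^6 * ((1 - ρ)^2)⁻¹ := by
    rw [integral_const_mul]
    calc 2*π^6 * ∫ r in Ioo (0:ℝ) 1, ((1-ρ*r)^3)⁻¹
        ≤ 2*π^6 * (8 * ((1-ρ)^2)⁻¹) :=
          mul_le_mul_of_nonneg_left (radial_int hρ0 hb) (by positivity)
      _ = 16 * π^6 * ((1 - ρ)^2)⁻¹ := by ring
  calc ∫ z in UD, g z = ∫ p in B, H p := by rw [step1, step3]
    _ = ∫ r in Ioo (0:ℝ) 1, ∫ θ in Ioo (-π) π, H (r, θ) := step4
    _ ≤ ∫ r in Ioo (0:ℝ) 1, 2*π^6*((1-ρ*r)^3)⁻¹ := houter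
    _ ≤ 16 * π^6 * ((1 - ρ)^2)⁻¹ := hfin


lemma normSq_diff (a z : ℂ) : Complex.normSq (1 - (starRingEnd ℂ) a * z) - Complex.normSq (a - z)
    = (1 - Complex.normSq a) * (1 - Complex.normSq z) := by
  simp only [Complex.normSq_apply, Complex.sub_re, Complex.sub_im, Complex.one_re, Complex.one_im,
    Complex.mul_re, Complex.mul_im, Complex.conj_re, Complex.conj_im]
  ring

lemma one_sub_ne {a z : ℂ} (ha : ‖a‖ < 1) (hz : ‖z‖ < 1) :
    (1 : ℂ) - (starRingEnd ℂ) a * z ≠ 0 := by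
  intro h
  have h2 : (starRingEnd ℂ) a * z = 1 := by
    have := sub_eq_zero.1 h; exact this.symm
  have h3 : ‖(starRingEnd ℂ) a * z‖ = 1 := by rw [h2, norm_one]
  rw [norm_mul, Complex.norm_conj] at h3
  nlinarith [norm_nonneg a, norm_nonneg z]

lemma moeb_id {a z : ℂ} (ha : ‖a‖ < 1) (hz : ‖z‖ < 1) :
    1 - ‖moeb a z‖ ^ 2 =
      (1 - ‖a‖ ^ 2) * (1 - ‖z‖ ^ 2) /
        Complex.normSq (1 - (starRingEnd ℂ) a * z) := by
  have hne := one_sub_ne ha hz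
  have hN : Complex.normSq (1 - (starRingEnd ℂ) a * z) ≠ 0 := by
    simpa [Complex.normSq_eq_zero] using hne
  rw [moeb, Complex.sq_norm, map_div₀ Complex.normSq, Complex.sq_norm, Complex.sq_norm]
  rw [eq_div_iff hN, sub_mul, div_mul_cancel₀ _ hN, one_mul]
  linarith [normSq_diff a z]

lemma habs_low' (w : ℂ) : 1 - ‖w‖ ≤ ‖1 - w‖ := by
  calc 1 - ‖w‖ = ‖(1:ℂ)‖ - ‖w‖ := by rw [norm_one]
    _ ≤ ‖1 - w‖ := norm_sub_norm_le _ _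
    _ = _ := rfl

lemma g_intOn (lam : ℝ) (h0 : 0 < lam) (h1 : lam < 1) {b : ℂ} (hb : ‖b‖ < 1) :
    IntegrableOn (fun z => (1 - ‖z‖ ^ 2) ^ (1 - lam) *
      ‖1 - (starRingEnd ℂ) b * z‖ ^ (lam - 5)) UD := by
  set ρ : ℝ := ‖b‖ with hρ
  have hρ0 : 0 ≤ ρ := norm_nonneg b
  have hρd : (0:ℝ) < 1 - ρ := by linarith
  have habs_ge : ∀ z : ℂ, ‖z‖ ≤ 1 →
      1 - ρ ≤ ‖1 - (starRingEnd ℂ) b * z‖ := by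
    intro z hz
    have h2 : ‖(starRingEnd ℂ) b * z‖ = ρ * ‖z‖ := by
      rw [norm_mul, Complex.norm_conj]
    have h3 : ρ * ‖z‖ ≤ ρ := by nlinarith [norm_nonneg z]
    have h4 := habs_low' ((starRingEnd ℂ) b * z)
    rw [h2] at h4
    linarith
  refine intOn_of_bdd measurableSet_ball (measure_ball_lt_top.ne) ?_
    (M := (1-ρ) ^ (lam - 5)) ?_
  · apply ContinuousOn.mul
    · apply ContinuousOn.rpow_const
      · exact (continuous_const.sub (continuous_norm.pow 2)).continuousOn
      · intro z _; right; linarith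
    · apply ContinuousOn.rpow_const
      · exact (continuous_norm.comp
          (continuous_const.sub (continuous_const.mul continuous_id))).continuousOn
      · intro z hz
        left
        have h3 := habs_ge z (mem_UD.1 hz).le
        intro hcon
        rw [hcon] at h3
        linarith
  · intro z hz
    have hz1 : ‖z‖ < 1 := mem_UD.1 hz
    have hb1 : (0:ℝ) ≤ 1 - ‖z‖ ^ 2 := by nlinarith [norm_nonneg z]
    have hfac1 : (1 - ‖z‖ ^ 2) ^ (1 - lam) ≤ 1 :=
      Real.rpow_le_one hb1 (by nlinarith [norm_nonneg z]) (by linarith)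
    have hfac2 : ‖1 - (starRingEnd ℂ) b * z‖ ^ (lam - 5) ≤ (1-ρ) ^ (lam-5) :=
      Real.rpow_le_rpow_of_nonpos hρd (habs_ge z hz1.le) (by linarith)
    have hnn1 : 0 ≤ (1 - ‖z‖ ^ 2) ^ (1 - lam) := Real.rpow_nonneg hb1 _
    have hnn2 : 0 ≤ ‖1 - (starRingEnd ℂ) b * z‖ ^ (lam - 5) :=
      Real.rpow_nonneg (norm_nonneg _) _
    rw [abs_of_nonneg (mul_nonneg hnn1 hnn2)]
    calc (1 - ‖z‖ ^ 2) ^ (1 - lam) *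
          ‖1 - (starRingEnd ℂ) b * z‖ ^ (lam - 5)
        ≤ 1 * ((1-ρ) ^ (lam-5)) := mul_le_mul hfac1 hfac2 hnn2 zero_le_one
      _ = (1-ρ) ^ (lam-5) := one_mul _



/-- the test functions F_b(z) = (1-|b|²)(1-b̄z)^{(λ-3)/2} have
Morrey seminorms bounded by a constant depending only on λ. -/
theorem stmt5 (lam : ℝ) (h0 : 0 < lam) (h1 : lam < 1) :
    ∃ C : ℝ, ∀ b ∈ UD, ∀ a ∈ UD,
      morreyInt lam
        (fun z => ((1 - ‖b‖ ^ 2 : ℝ) : ℂ) *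
          (1 - (starRingEnd ℂ) b * z) ^ (((lam : ℂ) - 3) / 2)) a ≤ C := by
  have hπ := Real.pi_pos
  refine ⟨576 * π^5, ?_⟩
  intro b hb a ha
  have hb1 : ‖b‖ < 1 := mem_UD.1 hb
  have ha1 : ‖a‖ < 1 := mem_UD.1 ha
  set ρb : ℝ := ‖b‖ with hρb
  set cb : ℝ := 1 - ‖b‖ ^ 2 with hcb
  have hρb0 : 0 ≤ ρb := norm_nonneg b
  have hcb0 : 0 < cb := by rw [hcb]; nlinarith
  set m : ℂ := ((lam : ℂ) - 3) / 2 with hm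
  set f : ℂ → ℂ := fun z => ((cb : ℝ) : ℂ) * (1 - (starRingEnd ℂ) b * z) ^ m with hf
  set pref : ℝ := (1 - ‖a‖ ^ 2) ^ (1 - lam) with hpref
  have hα0 : (0:ℝ) < 1 - ‖a‖ ^ 2 := by nlinarith [norm_nonneg a]
  have hpref0 : 0 < pref := Real.rpow_pos_of_pos hα0 _
  set E : ℂ → ℝ := fun z => (cb^2 * ((3-lam)/2)^2 * ρb^2) *
    (‖1 - (starRingEnd ℂ) b * z‖ ^ (lam-5)) *
    (1 - ‖moeb a z‖^2) with hE
  set g : ℂ → ℝ := fun z => (1 - ‖z‖ ^ 2) ^ (1 - lam) *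
    ‖1 - (starRingEnd ℂ) b * z‖ ^ (lam - 5) with hg
  have hsq : ∀ x : ℝ, 0 ≤ x → (x ^ ((lam-5)/2))^2 = x ^ (lam-5) := by
    intro x hx
    rw [← Real.rpow_natCast (x ^ ((lam-5)/2)) 2, ← Real.rpow_mul hx,
      show ((lam-5)/2) * ((2:ℕ):ℝ) = lam - 5 by push_cast; ring]
  -- derivative identity on UD
  have hEqOn : EqOn (fun z => ‖deriv f z‖ ^ 2 * (1 - ‖moeb a z‖ ^ 2)) E UD := by
    intro z hz
    have hz1 : ‖z‖ < 1 := mem_UD.1 hz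
    set w : ℂ := 1 - (starRingEnd ℂ) b * z with hw
    have hwabs : ‖(starRingEnd ℂ) b * z‖ < 1 := by
      rw [norm_mul, Complex.norm_conj]
      nlinarith [norm_nonneg z, norm_nonneg b]
    have hwne : w ≠ 0 := one_sub_ne hb1 hz1
    have hre : 0 < w.re := by
      rw [hw]
      simp only [Complex.sub_re, Complex.one_re]
      have := Complex.re_le_norm ((starRingEnd ℂ) b * z)
      linarith
    have hslit : w ∈ Complex.slitPlane := Complex.mem_slitPlane_iff.2 (Or.inl hre)
    have h1 : HasDerivAt (fun z : ℂ => 1 - (starRingEnd ℂ) b * z) (-((starRingEnd ℂ) b)) z := by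
      simpa using ((hasDerivAt_id z).const_mul ((starRingEnd ℂ) b)).const_sub 1
    have hD : HasDerivAt f (((cb : ℝ) : ℂ) * (m * w ^ (m-1) * (-((starRingEnd ℂ) b)))) z :=
      (h1.cpow_const hslit).const_mul _
    have hderiv : deriv f z = ((cb : ℝ) : ℂ) * (m * w ^ (m-1) * (-((starRingEnd ℂ) b))) :=
      hD.deriv
    have hm1 : m - 1 = (((lam-5)/2 : ℝ) : ℂ) := by rw [hm]; push_cast; ring
    have habs1 : ‖w ^ (m-1)‖ = ‖w‖ ^ ((lam-5)/2) := by
      rw [Complex.norm_cpow_of_ne_zero hwne, hm1]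
      simp [Complex.ofReal_re, Complex.ofReal_im]
    have habsm : ‖m‖ = (3-lam)/2 := by
      rw [show m = (((lam-3)/2 : ℝ) : ℂ) by rw [hm]; push_cast; ring, Complex.norm_real, Real.norm_eq_abs,
        abs_of_nonpos (by linarith)]
      ring
    have habs : ‖deriv f z‖ = cb * ((3-lam)/2) * ‖w‖ ^ ((lam-5)/2) * ρb := by
      rw [hderiv, norm_mul, norm_mul, norm_mul, habs1, habsm, Complex.norm_real, Real.norm_eq_abs,
        abs_of_pos hcb0, norm_neg, Complex.norm_conj]
      ring
    simp only []
    rw [habs, hE]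
    have := hsq (‖w‖) (norm_nonneg w)
    simp only [hw] at this ⊢
    rw [mul_pow, mul_pow, mul_pow, this]
    ring
  -- pointwise key inequality
  have key : ∀ z ∈ UD, pref * E z ≤ 9 * cb^2 *
      ((1 - ‖z‖ ^ 2) ^ (1 - lam) *
        ‖1 - (starRingEnd ℂ) b * z‖ ^ (lam - 5)) := by
    intro z hz
    have hz1 : ‖z‖ < 1 := mem_UD.1 hz
    have hζ0 : (0:ℝ) < 1 - ‖z‖ ^ 2 := by nlinarith [norm_nonneg z]
    set α : ℝ := 1 - ‖a‖ ^ 2 with hα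
    set ζ : ℝ := 1 - ‖z‖ ^ 2 with hζ
    set S : ℝ := ‖1 - (starRingEnd ℂ) a * z‖ with hS
    set A : ℝ := ‖1 - (starRingEnd ℂ) b * z‖ with hA
    have hA0 : 0 ≤ A := norm_nonneg _
    have haz := habs_low' ((starRingEnd ℂ) a * z)
    rw [norm_mul, Complex.norm_conj] at haz
    have hSpos : 0 < S := by
      have : ‖a‖ * ‖z‖ < 1 := by
        nlinarith [norm_nonneg a, norm_nonneg z]
      rw [hS]; linarith [haz]
    have hSa : α/2 ≤ S := by
      nlinarith [norm_nonneg a, norm_nonneg z, haz]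
    have hSz : ζ/2 ≤ S := by
      nlinarith [norm_nonneg a, norm_nonneg z, haz]
    have hNS : Complex.normSq (1 - (starRingEnd ℂ) a * z) = S^2 := (Complex.sq_norm _).symm
    have hT : 1 - ‖moeb a z‖^2 = α * ζ / S^2 := by
      rw [moeb_id ha1 hz1, hNS]
    have hDN : (α/2)^(2-lam) * (ζ/2)^lam ≤ S^2 := by
      have hSsplit : S^((2-lam):ℝ) * S^(lam:ℝ) = S^2 := by
        rw [← Real.rpow_add hSpos, show (2-lam)+lam = ((2:ℕ):ℝ) by push_cast; ring,
          Real.rpow_natCast]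
      rw [← hSsplit]
      exact mul_le_mul (Real.rpow_le_rpow (by positivity) hSa (by linarith))
        (Real.rpow_le_rpow (by positivity) hSz (by linarith))
        (Real.rpow_nonneg (by positivity) _) (Real.rpow_nonneg hSpos.le _)
    have h2pow : (2:ℝ)^((2-lam):ℝ) * (2:ℝ)^(lam:ℝ) = 4 := by
      rw [← Real.rpow_add two_pos, show (2-lam)+lam = ((2:ℕ):ℝ) by push_cast; ring,
        Real.rpow_natCast]
      norm_num
    have hζζ : ζ^((1-lam):ℝ) * ζ^(lam:ℝ) = ζ := by
      rw [← Real.rpow_add hζ0, show (1-lam)+lam = (1:ℝ) by ring, Real.rpow_one]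
    have hαα : α^((1-lam):ℝ) * α = α^((2-lam):ℝ) := by
      have h3 : α^((1-lam):ℝ) * α^((1:ℝ)) = α^((2-lam):ℝ) := by
        rw [← Real.rpow_add hα0, show (1-lam)+1 = (2-lam:ℝ) by ring]
      rwa [Real.rpow_one] at h3
    have heq : 4 * ζ^((1-lam):ℝ) * ((α/2)^((2-lam):ℝ) * (ζ/2)^(lam:ℝ))
        = α^((1-lam):ℝ) * (α * ζ) := by
      rw [Real.div_rpow hα0.le (by norm_num), Real.div_rpow hζ0.le (by norm_num),
        div_mul_div_comm, h2pow]
      linear_combination α^((2-lam):ℝ) * hζζ - ζ * hαα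
    have part2 : pref * (α * ζ / S^2) ≤ 4 * ζ^((1-lam):ℝ) := by
      rw [hpref, mul_div_assoc']
      rw [div_le_iff₀ (by positivity)]
      calc α^((1-lam):ℝ) * (α * ζ) = 4 * ζ^((1-lam):ℝ) * ((α/2)^((2-lam):ℝ) * (ζ/2)^(lam:ℝ)) :=
            heq.symm
        _ ≤ 4 * ζ^((1-lam):ℝ) * S^2 :=
            mul_le_mul_of_nonneg_left hDN (by positivity)
    have part1 : cb^2 * ((3-lam)/2)^2 * ρb^2 ≤ (9/4) * cb^2 := by
      have e1 : ((3-lam)/2)^2 ≤ 9/4 := by nlinarith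
      have e2 : ρb^2 ≤ 1 := by nlinarith
      have e3 : ((3-lam)/2)^2 * ρb^2 ≤ 9/4 := by
        nlinarith [mul_le_mul e1 e2 (sq_nonneg ρb) (by norm_num : (0:ℝ) ≤ 9/4)]
      calc cb^2 * ((3-lam)/2)^2 * ρb^2 = cb^2 * (((3-lam)/2)^2 * ρb^2) := by ring
        _ ≤ cb^2 * (9/4) := mul_le_mul_of_nonneg_left e3 (sq_nonneg cb)
        _ = (9/4) * cb^2 := by ring
    have hTnn : 0 ≤ α * ζ / S^2 := by positivity
    calc pref * E z = (cb^2 * ((3-lam)/2)^2 * ρb^2 * A^(lam-5)) * (pref * (α * ζ / S^2)) := by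
          rw [hE]
          simp only [← hA, hT]
          ring
      _ ≤ ((9/4) * cb^2 * A^(lam-5)) * (4 * ζ^((1-lam):ℝ)) := by
          refine mul_le_mul ?_ part2 (mul_nonneg hpref0.le hTnn) (by positivity)
          exact mul_le_mul_of_nonneg_right part1 (Real.rpow_nonneg hA0 _)
      _ = 9 * cb^2 * (ζ^((1-lam):ℝ) * A^(lam-5)) := by ring
  -- integrability of E on UD
  have hmoeb_cont : ContinuousOn (fun z => moeb a z) UD := by
    apply ContinuousOn.div
    · exact (continuous_const.sub continuous_id).continuousOn
    · exact (continuous_const.sub (continuous_const.mul continuous_id)).continuousOn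
    · exact fun z hz => one_sub_ne ha1 (mem_UD.1 hz)
  have hEcont : ContinuousOn E UD := by
    rw [hE]
    apply ContinuousOn.mul
    · apply ContinuousOn.mul continuous_const.continuousOn
      apply ContinuousOn.rpow_const
      · exact (continuous_norm.comp
          (continuous_const.sub (continuous_const.mul continuous_id))).continuousOn
      · intro z hz
        left
        have h4 := habs_low' ((starRingEnd ℂ) b * z)
        rw [norm_mul, Complex.norm_conj] at h4
        have h5 : ‖b‖ * ‖z‖ < 1 := by
          nlinarith [norm_nonneg z, norm_nonneg b, mem_UD.1 hz]
        intro hcon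
        rw [hcon] at h4
        linarith
    · exact continuous_const.continuousOn.sub
        ((continuous_norm.comp_continuousOn hmoeb_cont).pow 2)
  have hEbdd : ∀ z ∈ UD, |E z| ≤ cb^2 * ((3-lam)/2)^2 * ρb^2 * (1-ρb) ^ (lam-5) := by
    intro z hz
    have hz1 : ‖z‖ < 1 := mem_UD.1 hz
    have hζ0 : (0:ℝ) < 1 - ‖z‖ ^ 2 := by nlinarith [norm_nonneg z]
    have hT : 1 - ‖moeb a z‖^2 =
        (1 - ‖a‖ ^ 2) * (1 - ‖z‖ ^ 2) /
          Complex.normSq (1 - (starRingEnd ℂ) a * z) := moeb_id ha1 hz1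
    have hNpos : 0 < Complex.normSq (1 - (starRingEnd ℂ) a * z) :=
      Complex.normSq_pos.2 (one_sub_ne ha1 hz1)
    have hT0 : 0 ≤ 1 - ‖moeb a z‖^2 := by
      rw [hT]; positivity
    have hT1 : 1 - ‖moeb a z‖^2 ≤ 1 := by
      nlinarith [sq_nonneg (‖moeb a z‖)]
    have h4 := habs_low' ((starRingEnd ℂ) b * z)
    rw [norm_mul, Complex.norm_conj] at h4
    have hge : 1 - ρb ≤ ‖1 - (starRingEnd ℂ) b * z‖ := by
      nlinarith [norm_nonneg z, norm_nonneg b]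
    have hrd : (0:ℝ) < 1 - ρb := by linarith
    have hf2 : ‖1 - (starRingEnd ℂ) b * z‖ ^ (lam - 5) ≤ (1-ρb) ^ (lam-5) :=
      Real.rpow_le_rpow_of_nonpos hrd hge (by linarith)
    have hAnn : 0 ≤ ‖1 - (starRingEnd ℂ) b * z‖ ^ (lam - 5) :=
      Real.rpow_nonneg (norm_nonneg _) _
    have hcoef : (0:ℝ) ≤ cb^2 * ((3-lam)/2)^2 * ρb^2 := by positivity
    rw [hE, abs_of_nonneg (by positivity)]
    calc cb^2 * ((3-lam)/2)^2 * ρb^2 * ‖1 - (starRingEnd ℂ) b * z‖ ^ (lam-5) *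
          (1 - ‖moeb a z‖^2)
        ≤ cb^2 * ((3-lam)/2)^2 * ρb^2 * ((1-ρb) ^ (lam-5)) * 1 := by
          refine mul_le_mul ?_ hT1 hT0 ?_
          · exact mul_le_mul_of_nonneg_left hf2 hcoef
          · positivity
      _ = cb^2 * ((3-lam)/2)^2 * ρb^2 * (1-ρb) ^ (lam-5) := by ring
  have hEint : IntegrableOn E UD :=
    intOn_of_bdd measurableSet_ball measure_ball_lt_top.ne hEcont hEbdd
  have hgi := g_intOn lam h0 h1 hb1
  have hcongr : ∫ z in UD, ‖deriv f z‖ ^ 2 * (1 - ‖moeb a z‖ ^ 2)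
      = ∫ z in UD, E z := setIntegral_congr_fun measurableSet_ball hEqOn
  have hmono : ∫ z in UD, pref * E z ≤ ∫ z in UD, 9 * cb^2 *
      ((1 - ‖z‖ ^ 2) ^ (1 - lam) *
        ‖1 - (starRingEnd ℂ) b * z‖ ^ (lam - 5)) :=
    setIntegral_mono_on (hEint.const_mul pref) (hgi.const_mul _) measurableSet_ball key
  have hFR := FR lam h0 h1 hb1
  have hfact : cb = (1-ρb)*(1+ρb) := by rw [hcb, hρb]; ring
  have hrd : (0:ℝ) < 1 - ρb := by linarith
  have h9 : cb^2 * ((1-ρb)^2)⁻¹ = (1+ρb)^2 := by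
    rw [hfact]
    field_simp
  have h10 : cb^2 * ((1-ρb)^2)⁻¹ ≤ 4 := by rw [h9]; nlinarith
  have hππ : π⁻¹ * π^6 = π^5 := by field_simp
  calc morreyInt lam f a = π⁻¹ * ∫ z in UD, pref * E z := by
        unfold morreyInt
        rw [← hpref, hcongr, integral_const_mul]
        ring
    _ ≤ π⁻¹ * ∫ z in UD, 9 * cb^2 * ((1 - ‖z‖ ^ 2) ^ (1 - lam) *
          ‖1 - (starRingEnd ℂ) b * z‖ ^ (lam - 5)) :=
        mul_le_mul_of_nonneg_left hmono (by positivity)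
    _ = π⁻¹ * (9 * cb^2 * ∫ z in UD, (1 - ‖z‖ ^ 2) ^ (1 - lam) *
          ‖1 - (starRingEnd ℂ) b * z‖ ^ (lam - 5)) := by
        rw [integral_const_mul]
    _ ≤ π⁻¹ * (9 * cb^2 * (16 * π^6 * ((1 - ρb)^2)⁻¹)) := by
        refine mul_le_mul_of_nonneg_left ?_ (by positivity)
        exact mul_le_mul_of_nonneg_left hFR (by positivity)
    _ = 144 * (π⁻¹ * π^6) * (cb^2 * ((1-ρb)^2)⁻¹) := by ring
    _ = 144 * π^5 * (cb^2 * ((1-ρb)^2)⁻¹) := by rw [hππ]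
    _ ≤ 144 * π^5 * 4 := mul_le_mul_of_nonneg_left h10 (by positivity)
    _ = 576 * π^5 := by ring
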